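/- For a twist Θ = [[ω̃, v],[0, 0]] ∈ se(3) with ω ∈ ℝ³, 0 < ‖ω‖, the matrix exponential exp(Θ) equals [[exp(ω̃), T(ω)ᵀ v],[0, 1]], where T(ω) is the SO(3)-tangent operator T(ω) = I - (β/2) ω̃ + ((1-α)/‖ω‖²) ω̃². -/

import Mathlib

open Matrix Real
open scoped Nat

def skew (ω : Fin 3 → ℝ) : Matrix (Fin 3) (Fin 3) ℝ :=
  !![0, -ω 2, ω 1; ω 2, 0, -ω 0; -ω 1, ω 0, 0]

noncomputable def norm3 (ω : Fin 3 → ℝ) : ℝ := Real.sqrt (ω 0 ^ 2 + ω 1 ^ 2 + ω 2 ^ 2)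

def colv (r : Fin 3 → ℝ) : Matrix (Fin 3) (Fin 1) ℝ := fun i _ => r i

def isSO3 (A : Matrix (Fin 3) (Fin 3) ℝ) : Prop := Aᵀ * A = 1 ∧ A.det = 1

def mkSE3 (A : Matrix (Fin 3) (Fin 3) ℝ) (r : Fin 3 → ℝ) :
    Matrix (Fin 3 ⊕ Fin 1) (Fin 3 ⊕ Fin 1) ℝ :=
  Matrix.fromBlocks A (colv r) 0 1

lemma norm3_sq (ω : Fin 3 → ℝ) : norm3 ω ^ 2 = ω 0 ^ 2 + ω 1 ^ 2 + ω 2 ^ 2 := by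
  rw [norm3, Real.sq_sqrt (by positivity)]

lemma skew_cube (ω : Fin 3 → ℝ) : skew ω ^ 3 = (-(norm3 ω ^ 2)) • skew ω := by
  rw [norm3_sq, pow_succ, pow_two]
  ext i j
  fin_cases i <;> fin_cases j <;>
    simp [skew, Matrix.mul_apply, Fin.sum_univ_three] <;> ring

lemma skew_transpose (ω : Fin 3 → ℝ) : (skew ω)ᵀ = -skew ω := by
  ext i j
  fin_cases i <;> fin_cases j <;> simp [skew]

lemma mul_colv (M : Matrix (Fin 3) (Fin 3) ℝ) (v : Fin 3 → ℝ) :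
    M * colv v = colv (M *ᵥ v) := by
  ext i j
  simp [Matrix.mul_apply, colv, Matrix.mulVec, dotProduct]

lemma skew_pow_odd (ω : Fin 3 → ℝ) (k : ℕ) :
    skew ω ^ (2 * k + 1) = ((-(norm3 ω ^ 2)) ^ k) • skew ω := by
  induction k with
  | zero => simp
  | succ n ih =>
      calc skew ω ^ (2 * (n + 1) + 1) = skew ω ^ (2 * n + 1) * skew ω ^ 2 := by
            rw [← pow_add]; ring_nf
        _ = ((-(norm3 ω ^ 2)) ^ n) • (skew ω * skew ω ^ 2) := by rw [ih, smul_mul_assoc]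
        _ = ((-(norm3 ω ^ 2)) ^ n) • skew ω ^ 3 := by rw [← pow_succ']
        _ = ((-(norm3 ω ^ 2)) ^ (n + 1)) • skew ω := by
            rw [skew_cube, smul_smul, ← pow_succ]

lemma skew_pow_even (ω : Fin 3 → ℝ) (k : ℕ) :
    skew ω ^ (2 * k + 2) = ((-(norm3 ω ^ 2)) ^ k) • skew ω ^ 2 := by
  calc skew ω ^ (2 * k + 2) = skew ω ^ (2 * k + 1) * skew ω := by rw [← pow_succ]
    _ = ((-(norm3 ω ^ 2)) ^ k) • (skew ω * skew ω) := by rw [skew_pow_odd, smul_mul_assoc]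
    _ = _ := by rw [← pow_two]

lemma hasSum_S1 {θ : ℝ} (hθ : θ ≠ 0) :
    HasSum (fun k : ℕ => (((2 * k + 2)! : ℝ))⁻¹ * (-(θ ^ 2)) ^ k) ((1 - Real.cos θ) / θ ^ 2) := by
  have h := Real.hasSum_cos θ
  have h1 : HasSum (fun n : ℕ => (-1 : ℝ) ^ (n + 1) * θ ^ (2 * (n + 1)) / (2 * (n + 1))!)
      (Real.cos θ - 1) := by
    rw [hasSum_nat_add_iff (f := fun n : ℕ => (-1 : ℝ) ^ n * θ ^ (2 * n) / (2 * n)!) 1]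
    simpa using h
  have h2 := h1.mul_left (-(θ ^ 2)⁻¹)
  have hf : (fun n : ℕ => -(θ ^ 2)⁻¹ * ((-1 : ℝ) ^ (n + 1) * θ ^ (2 * (n + 1)) / (2 * (n + 1))!))
      = fun k : ℕ => (((2 * k + 2)! : ℝ))⁻¹ * (-(θ ^ 2)) ^ k := by
    funext k
    have he : 2 * (k + 1) = 2 * k + 2 := by ring
    rw [he]
    have : (θ ^ 2) ^ (k + 1) = θ ^ (2 * k + 2) := by rw [← pow_mul]; ring_nf
    field_simp
    rw [← this]
    ring
  have hv : -(θ ^ 2)⁻¹ * (Real.cos θ - 1) = (1 - Real.cos θ) / θ ^ 2 := by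
    field_simp
    ring
  rw [hf, hv] at h2
  exact h2

lemma hasSum_S2 {θ : ℝ} (hθ : θ ≠ 0) :
    HasSum (fun k : ℕ => (((2 * k + 3)! : ℝ))⁻¹ * (-(θ ^ 2)) ^ k)
      ((1 - Real.sin θ / θ) / θ ^ 2) := by
  have h := Real.hasSum_sin θ
  have h1 : HasSum (fun n : ℕ => (-1 : ℝ) ^ (n + 1) * θ ^ (2 * (n + 1) + 1) / (2 * (n + 1) + 1)!)
      (Real.sin θ - θ) := by
    rw [hasSum_nat_add_iff (f := fun n : ℕ => (-1 : ℝ) ^ n * θ ^ (2 * n + 1) / (2 * n + 1)!) 1]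
    simpa using h
  have h2 := h1.mul_left (-(θ ^ 3)⁻¹)
  have hf : (fun n : ℕ =>
        -(θ ^ 3)⁻¹ * ((-1 : ℝ) ^ (n + 1) * θ ^ (2 * (n + 1) + 1) / (2 * (n + 1) + 1)!))
      = fun k : ℕ => (((2 * k + 3)! : ℝ))⁻¹ * (-(θ ^ 2)) ^ k := by
    funext k
    have he : 2 * (k + 1) + 1 = 2 * k + 3 := by ring
    rw [he]
    have h3 : θ ^ (2 * k + 3) = θ ^ 3 * (θ ^ 2) ^ k := by rw [← pow_mul, ← pow_add]; ring_nf
    field_simp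
    rw [h3]
    ring
  have hv : -(θ ^ 3)⁻¹ * (Real.sin θ - θ) = (1 - Real.sin θ / θ) / θ ^ 2 := by
    rw [eq_div_iff (pow_ne_zero 2 hθ)]
    field_simp
    ring
  rw [hf, hv] at h2
  exact h2


noncomputable def Tso (ω : Fin 3 → ℝ) : Matrix (Fin 3) (Fin 3) ℝ :=
  1 - (2 * (1 - Real.cos (norm3 ω)) / norm3 ω ^ 2 / 2) • skew ω
    + ((1 - Real.sin (norm3 ω) / norm3 ω) / norm3 ω ^ 2) • (skew ω ^ 2)

lemma hasSum_Phi (ω : Fin 3 → ℝ) (h : 0 < norm3 ω) :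
    HasSum (fun n : ℕ => (((n + 1)! : ℝ))⁻¹ • skew ω ^ n) (Tso ω)ᵀ := by
  set θ := norm3 ω with hθdef
  have hθ : θ ≠ 0 := ne_of_gt h
  letI : SeminormedRing (Matrix (Fin 3) (Fin 3) ℝ) := Matrix.linftyOpSemiNormedRing
  letI : NormedRing (Matrix (Fin 3) (Fin 3) ℝ) := Matrix.linftyOpNormedRing
  letI : NormedAlgebra ℝ (Matrix (Fin 3) (Fin 3) ℝ) := Matrix.linftyOpNormedAlgebra
  set A := skew ω with hA
  set g : ℕ → Matrix (Fin 3) (Fin 3) ℝ := fun n => (((n + 1)! : ℝ))⁻¹ • A ^ n with hg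
  have heven : HasSum (fun k : ℕ => g (2 * k + 1)) (((1 - Real.cos θ) / θ ^ 2) • A) := by
    have := (hasSum_S1 hθ).smul_const A
    convert this using 2 with k
    rw [hg]
    simp only
    rw [skew_pow_odd, smul_smul]
  have hodd : HasSum (fun k : ℕ => g (2 * k + 2)) (((1 - Real.sin θ / θ) / θ ^ 2) • A ^ 2) := by
    have := (hasSum_S2 hθ).smul_const (A ^ 2)
    convert this using 2 with k
    rw [hg]
    simp only
    rw [skew_pow_even, smul_smul]
  have hshift : HasSum (fun n : ℕ => g (n + 1))
      (((1 - Real.cos θ) / θ ^ 2) • A + ((1 - Real.sin θ / θ) / θ ^ 2) • A ^ 2) := by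
    refine HasSum.even_add_odd ?_ ?_
    · convert heven using 2 with k
    · convert hodd using 2 with k
  have htot := (hasSum_nat_add_iff 1).mp hshift
  rw [Finset.sum_range_one] at htot
  have hg0 : g 0 = 1 := by simp [hg]
  rw [hg0] at htot
  have hT : (Tso ω)ᵀ
      = ((1 - Real.cos θ) / θ ^ 2) • A + ((1 - Real.sin θ / θ) / θ ^ 2) • A ^ 2 + 1 := by
    rw [Tso]
    rw [Matrix.transpose_add, Matrix.transpose_sub, Matrix.transpose_smul, Matrix.transpose_smul,
      Matrix.transpose_one, Matrix.transpose_pow, skew_transpose]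
    have : 2 * (1 - Real.cos θ) / θ ^ 2 / 2 = (1 - Real.cos θ) / θ ^ 2 := by ring
    rw [this]
    rw [neg_pow]
    simp [smul_neg]
    abel
  rw [hT]
  exact htot

lemma block_pow (A : Matrix (Fin 3) (Fin 3) ℝ) (B : Matrix (Fin 3) (Fin 1) ℝ) (n : ℕ) :
    (Matrix.fromBlocks A B (0 : Matrix (Fin 1) (Fin 3) ℝ) (0 : Matrix (Fin 1) (Fin 1) ℝ)) ^ (n + 1)
      = Matrix.fromBlocks (A ^ (n + 1)) (A ^ n * B) 0 0 := by
  induction n with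
  | zero => simp
  | succ n ih =>
      rw [pow_succ, ih, Matrix.fromBlocks_multiply]
      simp [pow_succ]

noncomputable def Lblk : (Matrix (Fin 3) (Fin 3) ℝ × Matrix (Fin 3) (Fin 1) ℝ) →L[ℝ]
    Matrix (Fin 3 ⊕ Fin 1) (Fin 3 ⊕ Fin 1) ℝ :=
  LinearMap.toContinuousLinearMap
    { toFun := fun p => Matrix.fromBlocks p.1 p.2 0 0
      map_add' := by
        intro p q
        simp [Matrix.fromBlocks_add]
      map_smul' := by
        intro c p
        simp [Matrix.fromBlocks_smul] }

noncomputable def mulColv (B : Matrix (Fin 3) (Fin 1) ℝ) :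
    Matrix (Fin 3) (Fin 3) ℝ →L[ℝ] Matrix (Fin 3) (Fin 1) ℝ :=
  LinearMap.toContinuousLinearMap
    { toFun := fun X => X * B
      map_add' := by intro X Y; simp [Matrix.add_mul]
      map_smul' := by intro c X; simp [smul_mul_assoc] }


set_option maxHeartbeats 1000000 in
theorem exp_se3 (ω v : Fin 3 → ℝ) (h : 0 < norm3 ω) :
    NormedSpace.exp (Matrix.fromBlocks (skew ω) (colv v) (0 : Matrix (Fin 1) (Fin 3) ℝ) (0 : Matrix (Fin 1) (Fin 1) ℝ)) =
      Matrix.fromBlocks (NormedSpace.exp (skew ω)) (colv ((Tso ω)ᵀ *ᵥ v)) (0 : Matrix (Fin 1) (Fin 3) ℝ) (1 : Matrix (Fin 1) (Fin 1) ℝ) := by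
  letI : SeminormedRing (Matrix (Fin 3) (Fin 3) ℝ) := Matrix.linftyOpSemiNormedRing
  letI : NormedRing (Matrix (Fin 3) (Fin 3) ℝ) := Matrix.linftyOpNormedRing
  letI : NormedAlgebra ℝ (Matrix (Fin 3) (Fin 3) ℝ) := Matrix.linftyOpNormedAlgebra
  set A := skew ω with hA
  set B := colv v with hB
  set M := Matrix.fromBlocks A B (0 : Matrix (Fin 1) (Fin 3) ℝ) (0 : Matrix (Fin 1) (Fin 1) ℝ)
    with hM
  -- the exponential series of A
  have hE : HasSum (fun n : ℕ => ((n ! : ℝ))⁻¹ • A ^ n) (NormedSpace.exp A) :=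
    NormedSpace.exp_series_hasSum_exp' A
  have hE1 : HasSum (fun n : ℕ => (((n + 1)! : ℝ))⁻¹ • A ^ (n + 1))
      (NormedSpace.exp A - 1) := by
    rw [hasSum_nat_add_iff (f := fun n : ℕ => ((n ! : ℝ))⁻¹ • A ^ n) 1]
    simpa using hE
  -- the tangent-operator series applied to B
  have hΦ := (hasSum_Phi ω h).mapL (mulColv B)
  have hΦ' : HasSum (fun n : ℕ => (((n + 1)! : ℝ))⁻¹ • (A ^ n * B)) ((Tso ω)ᵀ * B) := by
    convert hΦ using 2 with n <;> simp [mulColv, smul_mul_assoc, hA]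
  -- combine into a block sum
  have hpair := (hE1.prodMk hΦ').mapL Lblk
  have hterm : (fun n : ℕ => Lblk ((((n + 1)! : ℝ))⁻¹ • A ^ (n + 1),
        (((n + 1)! : ℝ))⁻¹ • (A ^ n * B)))
      = fun n : ℕ => ((((n + 1) : ℕ)! : ℝ))⁻¹ • M ^ (n + 1) := by
    funext n
    rw [hM, block_pow]
    simp [Lblk, Matrix.fromBlocks_smul]
  rw [hterm] at hpair
  have hLval : Lblk (NormedSpace.exp A - 1, (Tso ω)ᵀ * B)
      = Matrix.fromBlocks (NormedSpace.exp A - 1) ((Tso ω)ᵀ * B) 0 0 := rfl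
  rw [hLval] at hpair
  have htot := (hasSum_nat_add_iff (f := fun n : ℕ => ((n ! : ℝ))⁻¹ • M ^ n) 1).mp hpair
  rw [Finset.sum_range_one] at htot
  have hzero : ((0 ! : ℝ))⁻¹ • M ^ 0 = Matrix.fromBlocks (1 : Matrix (Fin 3) (Fin 3) ℝ)
      (0 : Matrix (Fin 3) (Fin 1) ℝ) 0 (1 : Matrix (Fin 1) (Fin 1) ℝ) := by
    simp [Matrix.fromBlocks_one]
  rw [hzero] at htot
  have hsum : Matrix.fromBlocks (NormedSpace.exp A - 1) ((Tso ω)ᵀ * B) 0 0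
        + Matrix.fromBlocks (1 : Matrix (Fin 3) (Fin 3) ℝ) (0 : Matrix (Fin 3) (Fin 1) ℝ) 0
          (1 : Matrix (Fin 1) (Fin 1) ℝ)
      = Matrix.fromBlocks (NormedSpace.exp A) (colv ((Tso ω)ᵀ *ᵥ v)) 0 1 := by
    rw [Matrix.fromBlocks_add]
    congr 1 <;> simp [hB, mul_colv]
  rw [hsum] at htot
  rw [NormedSpace.exp_eq_tsum ℝ]
  exact htot.tsum_eq
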